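/- arXiv:2409.02703 — 2 statements merged into one kernel-verified Lean document; each statement's English description precedes it below -/
import Mathlib

section
/- Let γ > 0, let H ∈ ℝ^{p×M} be a matrix, and let U ∈ ℝ^{N×r} and V ∈ ℝ^{M×r} be matrices with orthonormal columns and Σ ∈ ℝ^{r×r} a diagonal matrix. Let A, B ∈ ℝ^{N×M} be matrices with A − B = U Σ Vᵀ. Let W_A and W_B denote the unique minimizers over W ∈ ℝ^{N×p} of the regularized least-squares objectives ‖A + W H‖_F² + γ‖W‖_F² and ‖B + W H‖_F² + γ‖W‖_F², respectively. Then ‖W_A − W_B‖_F ≤ α · ‖Σ‖_F, where α = σ_max(H) / σ_min(H Hᵀ + γ I), σ_max denotes the largest singular value, and σ_min denotes the smallest singular value. -/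
open Matrix

/-- Squared Frobenius norm of a real matrix. -/
noncomputable def frobSq {m n : ℕ} (A : Matrix (Fin m) (Fin n) ℝ) : ℝ :=
  ∑ i, ∑ j, (A i j) ^ 2

/-- Frobenius norm of a real matrix. -/
noncomputable def frobNorm {m n : ℕ} (A : Matrix (Fin m) (Fin n) ℝ) : ℝ :=
  Real.sqrt (frobSq A)

/-- Largest singular value of a real matrix `H`: the square root of the largest
eigenvalue of `H Hᵀ` (for real matrices `Hᴴ = Hᵀ`). -/
noncomputable def maxSingularValue {m n : ℕ} (H : Matrix (Fin m) (Fin n) ℝ) : ℝ :=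
  Real.sqrt (⨆ i, (Matrix.isHermitian_mul_conjTranspose_self H).eigenvalues i)

/-- Smallest singular value of a real square matrix `A`: the square root of the smallest
eigenvalue of `A Aᵀ` (for real matrices `Aᴴ = Aᵀ`). -/
noncomputable def minSingularValue {n : ℕ} (A : Matrix (Fin n) (Fin n) ℝ) : ℝ :=
  Real.sqrt (⨅ i, (Matrix.isHermitian_mul_conjTranspose_self A).eigenvalues i)

/-- The regularized (ridge) least-squares objective `‖A + W H‖_F² + γ ‖W‖_F²`. -/
noncomputable def objective {N M p : ℕ} (γ : ℝ) (H : Matrix (Fin p) (Fin M) ℝ)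
    (A : Matrix (Fin N) (Fin M) ℝ) (W : Matrix (Fin N) (Fin p) ℝ) : ℝ :=
  frobSq (A + W * H) + γ * frobSq W

/-! ### Auxiliary lemmas -/

/-- Frobenius inner product. -/
noncomputable def fip {m n : ℕ} (X Y : Matrix (Fin m) (Fin n) ℝ) : ℝ :=
  Matrix.trace (X * Yᵀ)

lemma fip_eq_sum {m n : ℕ} (X Y : Matrix (Fin m) (Fin n) ℝ) :
    fip X Y = ∑ i, ∑ j, X i j * Y i j := by
  simp [fip, Matrix.trace, Matrix.diag, Matrix.mul_apply]

lemma frobSq_eq_fip {m n : ℕ} (A : Matrix (Fin m) (Fin n) ℝ) : frobSq A = fip A A := by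
  simp [frobSq, fip_eq_sum, sq]

lemma frobSq_nonneg {m n : ℕ} (A : Matrix (Fin m) (Fin n) ℝ) : 0 ≤ frobSq A :=
  Finset.sum_nonneg fun _ _ => Finset.sum_nonneg fun _ _ => sq_nonneg _

lemma frobSq_eq_zero {m n : ℕ} {A : Matrix (Fin m) (Fin n) ℝ} (h : frobSq A = 0) : A = 0 := by
  ext i j
  have h1 := (Finset.sum_eq_zero_iff_of_nonneg
    (fun i _ => Finset.sum_nonneg fun j _ => sq_nonneg (A i j))).mp h i (Finset.mem_univ i)
  have h2 := (Finset.sum_eq_zero_iff_of_nonneg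
    (fun j _ => sq_nonneg (A i j))).mp h1 j (Finset.mem_univ j)
  simpa using pow_eq_zero_iff (n := 2) (by norm_num) |>.mp h2

lemma fip_comm {m n : ℕ} (X Y : Matrix (Fin m) (Fin n) ℝ) : fip X Y = fip Y X := by
  rw [fip, fip, ← Matrix.trace_transpose, Matrix.transpose_mul, Matrix.transpose_transpose]

lemma fip_add_left {m n : ℕ} (X Y Z : Matrix (Fin m) (Fin n) ℝ) :
    fip (X + Y) Z = fip X Z + fip Y Z := by
  simp [fip, Matrix.add_mul]

lemma fip_smul_left {m n : ℕ} (t : ℝ) (X Y : Matrix (Fin m) (Fin n) ℝ) :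
    fip (t • X) Y = t * fip X Y := by
  simp [fip, Matrix.smul_mul]

lemma fip_smul_right {m n : ℕ} (t : ℝ) (X Y : Matrix (Fin m) (Fin n) ℝ) :
    fip X (t • Y) = t * fip X Y := by
  simp [fip, Matrix.transpose_smul, Matrix.mul_smul]

lemma frobSq_add {m n : ℕ} (X Y : Matrix (Fin m) (Fin n) ℝ) :
    frobSq (X + Y) = frobSq X + 2 * fip X Y + frobSq Y := by
  rw [frobSq_eq_fip, frobSq_eq_fip, frobSq_eq_fip, fip, fip, fip, fip,
    Matrix.transpose_add, Matrix.add_mul, Matrix.mul_add, Matrix.mul_add,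
    Matrix.trace_add, Matrix.trace_add, Matrix.trace_add]
  have : Matrix.trace (Y * Xᵀ) = Matrix.trace (X * Yᵀ) := by
    rw [← Matrix.trace_transpose, Matrix.transpose_mul, Matrix.transpose_transpose]
  rw [this]; ring

lemma frobSq_smul {m n : ℕ} (t : ℝ) (X : Matrix (Fin m) (Fin n) ℝ) :
    frobSq (t • X) = t ^ 2 * frobSq X := by
  rw [frobSq_eq_fip, frobSq_eq_fip, fip_smul_left, fip_smul_right]; ring

lemma fip_mul_right {m n p : ℕ} (X : Matrix (Fin m) (Fin n) ℝ)
    (D : Matrix (Fin m) (Fin p) ℝ) (H : Matrix (Fin p) (Fin n) ℝ) :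
    fip X (D * H) = fip (X * Hᵀ) D := by
  rw [fip, fip, Matrix.transpose_mul, ← Matrix.mul_assoc]

lemma frobSq_neg {m n : ℕ} (X : Matrix (Fin m) (Fin n) ℝ) : frobSq (-X) = frobSq X := by
  simp [frobSq]

lemma lin_of_quad {a b : ℝ} (hb : 0 ≤ b) (h : ∀ t : ℝ, 0 ≤ a * t + b * t ^ 2) : a = 0 := by
  by_contra ha
  have hb1 : (0:ℝ) < 2 * b + 1 := by linarith
  have h1 := h (-a / (2 * b + 1))
  have h2 : a * (-a / (2 * b + 1)) + b * (-a / (2 * b + 1)) ^ 2 =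
      (a ^ 2 * (-(b + 1))) / (2 * b + 1) ^ 2 := by
    field_simp
    ring
  rw [h2] at h1
  have h3 : 0 < (2 * b + 1) ^ 2 := by positivity
  have h4 : 0 ≤ a ^ 2 * (-(b + 1)) := (div_nonneg_iff.mp h1).resolve_right (by push_neg; intro hc; linarith) |>.1
  have ha2 : 0 < a ^ 2 := by positivity
  nlinarith


lemma quadForm_bounds {n : ℕ} {S : Matrix (Fin n) (Fin n) ℝ} (hS : S.IsHermitian)
    (x : Fin n → ℝ) :
    (⨅ i, hS.eigenvalues i) * (∑ i, x i ^ 2) ≤ x ⬝ᵥ (S *ᵥ x) ∧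
      x ⬝ᵥ (S *ᵥ x) ≤ (⨆ i, hS.eigenvalues i) * (∑ i, x i ^ 2) := by
  classical
  set C : Matrix (Fin n) (Fin n) ℝ := (hS.eigenvectorUnitary : Matrix (Fin n) (Fin n) ℝ) with hCdef
  have hspec : S = C * diagonal (hS.eigenvalues) * Cᵀ := by
    refine hS.spectral_theorem.trans ?_
    rw [Unitary.conjStarAlgAut_apply]
    simp [hCdef, star_eq_conjTranspose, conjTranspose_eq_transpose_of_trivial]
  have hC : C ∈ Matrix.unitaryGroup (Fin n) ℝ := hS.eigenvectorUnitary.2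
  have hs : star C = Cᵀ := by ext i j; simp [conjTranspose_apply, star_apply]
  have h1 : C * Cᵀ = 1 := by rw [← hs]; exact (Matrix.mem_unitaryGroup_iff).mp hC
  have hsum : ∑ i, (Cᵀ *ᵥ x) i ^ 2 = ∑ i, x i ^ 2 := by
    have : (Cᵀ *ᵥ x) ⬝ᵥ (Cᵀ *ᵥ x) = x ⬝ᵥ x := by
      rw [dotProduct_mulVec, vecMul_transpose, mulVec_mulVec, h1, one_mulVec]
    simpa [dotProduct, sq] using this
  have hquad : x ⬝ᵥ (S *ᵥ x) = ∑ i, hS.eigenvalues i * (Cᵀ *ᵥ x) i ^ 2 := by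
    have h2 : x ⬝ᵥ (S *ᵥ x) = x ⬝ᵥ ((C * diagonal hS.eigenvalues * Cᵀ) *ᵥ x) := by
      rw [← hspec]
    rw [h2, ← mulVec_mulVec, ← mulVec_mulVec, dotProduct_mulVec, ← mulVec_transpose]
    simp [dotProduct, mulVec_diagonal, sq]
    exact Finset.sum_congr rfl fun i _ => by ring
  constructor
  · rw [hquad, ← hsum, Finset.mul_sum]
    refine Finset.sum_le_sum fun i _ => ?_
    exact mul_le_mul_of_nonneg_right (ciInf_le (Set.Finite.bddBelow (Set.finite_range _)) i)
      (sq_nonneg _)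
  · rw [hquad, ← hsum, Finset.mul_sum]
    refine Finset.sum_le_sum fun i _ => ?_
    exact mul_le_mul_of_nonneg_right (le_ciSup (Set.Finite.bddAbove (Set.finite_range _)) i)
      (sq_nonneg _)

lemma conjT_eq_transpose {m n : ℕ} (A : Matrix (Fin m) (Fin n) ℝ) : Aᴴ = Aᵀ := by
  ext i j; simp [conjTranspose_apply]

lemma maxSV_nonneg_sq {p M : ℕ} (H : Matrix (Fin p) (Fin M) ℝ) :
    (maxSingularValue H) ^ 2 = ⨆ i, (Matrix.isHermitian_mul_conjTranspose_self H).eigenvalues i := by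
  apply Real.sq_sqrt
  rcases Nat.eq_zero_or_pos p with hp | hp
  · subst hp
    haveI : IsEmpty (Fin 0) := inferInstance
    simp [Real.iSup_of_isEmpty]
  · haveI : Nonempty (Fin p) := ⟨⟨0, hp⟩⟩
    have h0 := (Matrix.posSemidef_self_mul_conjTranspose H).eigenvalues_nonneg ⟨0, hp⟩
    exact le_trans h0 (le_ciSup (Set.Finite.bddAbove (Set.finite_range _)) _)

/-- Row-wise operator-norm bound: `‖H x‖² ≤ σmax(H)² ‖x‖²`. -/
lemma mulVec_sq_le {p M : ℕ} (H : Matrix (Fin p) (Fin M) ℝ) (x : Fin M → ℝ) :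
    ∑ j, (H *ᵥ x) j ^ 2 ≤ (maxSingularValue H) ^ 2 * ∑ j, x j ^ 2 := by
  classical
  have hherm := Matrix.isHermitian_mul_conjTranspose_self H
  rw [maxSV_nonneg_sq]
  set lam := ⨆ i, hherm.eigenvalues i with hlam
  set y := H *ᵥ x with hy
  have hyy : ∑ j, y j ^ 2 = y ⬝ᵥ y := by simp [dotProduct, sq]
  have hxx : ∑ j, x j ^ 2 = x ⬝ᵥ x := by simp [dotProduct, sq]
  have h2 : y ⬝ᵥ y = (Hᵀ *ᵥ y) ⬝ᵥ x := by
    conv_lhs => rw [hy, dotProduct_mulVec, ← mulVec_transpose]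
  have h3 : ((Hᵀ *ᵥ y) ⬝ᵥ x) ^ 2 ≤ ((Hᵀ *ᵥ y) ⬝ᵥ (Hᵀ *ᵥ y)) * (x ⬝ᵥ x) := by
    simpa [dotProduct, sq] using Finset.sum_mul_sq_le_sq_mul_sq Finset.univ (Hᵀ *ᵥ y) x
  have h4 : (Hᵀ *ᵥ y) ⬝ᵥ (Hᵀ *ᵥ y) ≤ lam * (y ⬝ᵥ y) := by
    have he : (Hᵀ *ᵥ y) ⬝ᵥ (Hᵀ *ᵥ y) = y ⬝ᵥ ((H * Hᴴ) *ᵥ y) := by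
      rw [conjT_eq_transpose, ← mulVec_mulVec, dotProduct_mulVec (v := y), ← mulVec_transpose]
    have hq := (quadForm_bounds hherm y).2
    rw [he]
    calc y ⬝ᵥ ((H * Hᴴ) *ᵥ y) ≤ lam * ∑ i, y i ^ 2 := hq
      _ = lam * (y ⬝ᵥ y) := by rw [hyy]
  have hyy0 : 0 ≤ y ⬝ᵥ y := by rw [← hyy]; positivity
  have hxx0 : 0 ≤ x ⬝ᵥ x := by rw [← hxx]; positivity
  have hlam0 : 0 ≤ lam := by
    rw [hlam, ← maxSV_nonneg_sq H]; positivity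
  rw [hyy, hxx]
  rcases eq_or_lt_of_le hyy0 with h0 | h0
  · rw [← h0]; positivity
  · nlinarith

lemma minSV_nonneg_sq {n : ℕ} (P : Matrix (Fin n) (Fin n) ℝ) :
    (minSingularValue P) ^ 2 = ⨅ i, (Matrix.isHermitian_mul_conjTranspose_self P).eigenvalues i := by
  apply Real.sq_sqrt
  rcases Nat.eq_zero_or_pos n with hp | hp
  · subst hp
    simp [Real.iInf_of_isEmpty]
  · haveI : Nonempty (Fin n) := ⟨⟨0, hp⟩⟩
    exact le_ciInf fun i => (Matrix.posSemidef_self_mul_conjTranspose P).eigenvalues_nonneg i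

/-- Row-wise lower bound: `σmin(P)² ‖x‖² ≤ ‖Pᵀ x‖²`. -/
lemma mulVec_sq_ge {n : ℕ} (P : Matrix (Fin n) (Fin n) ℝ) (x : Fin n → ℝ) :
    (minSingularValue P) ^ 2 * ∑ j, x j ^ 2 ≤ ∑ j, (Pᵀ *ᵥ x) j ^ 2 := by
  classical
  have hherm := Matrix.isHermitian_mul_conjTranspose_self P
  rw [minSV_nonneg_sq]
  have he : x ⬝ᵥ ((P * Pᴴ) *ᵥ x) = (Pᵀ *ᵥ x) ⬝ᵥ (Pᵀ *ᵥ x) := by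
    rw [conjT_eq_transpose, ← mulVec_mulVec, dotProduct_mulVec (v := x), ← mulVec_transpose]
  have hq := (quadForm_bounds hherm x).1
  rw [he] at hq
  calc (⨅ i, hherm.eigenvalues i) * ∑ j, x j ^ 2 ≤ (Pᵀ *ᵥ x) ⬝ᵥ (Pᵀ *ᵥ x) := hq
    _ = ∑ j, (Pᵀ *ᵥ x) j ^ 2 := by simp [dotProduct, sq]

lemma frobSq_mul_transpose_le {N M p : ℕ} (X : Matrix (Fin N) (Fin M) ℝ)
    (H : Matrix (Fin p) (Fin M) ℝ) :
    frobSq (X * Hᵀ) ≤ (maxSingularValue H) ^ 2 * frobSq X := by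
  unfold frobSq
  rw [Finset.mul_sum]
  refine Finset.sum_le_sum fun i _ => ?_
  have h := mulVec_sq_le H (fun k => X i k)
  have he : ∀ j, (X * Hᵀ) i j = (H *ᵥ fun k => X i k) j := by
    intro j; simp [Matrix.mul_apply, Matrix.mulVec, dotProduct, mul_comm]
  simp only [he]
  exact h

lemma frobSq_mul_ge {N p : ℕ} (X : Matrix (Fin N) (Fin p) ℝ)
    (P : Matrix (Fin p) (Fin p) ℝ) :
    (minSingularValue P) ^ 2 * frobSq X ≤ frobSq (X * P) := by
  unfold frobSq
  rw [Finset.mul_sum]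
  refine Finset.sum_le_sum fun i _ => ?_
  have h := mulVec_sq_ge P (fun k => X i k)
  have he : ∀ j, (X * P) i j = (Pᵀ *ᵥ fun k => X i k) j := by
    intro j; simp [Matrix.mul_apply, Matrix.mulVec, dotProduct, mul_comm]
  simp only [he]
  exact h

/-- First-order optimality condition for the ridge objective. -/
lemma first_order {N M p : ℕ} (γ : ℝ) (hγ : 0 < γ) (H : Matrix (Fin p) (Fin M) ℝ)
    (A : Matrix (Fin N) (Fin M) ℝ) (W : Matrix (Fin N) (Fin p) ℝ)
    (hW : ∀ W' : Matrix (Fin N) (Fin p) ℝ, objective γ H A W ≤ objective γ H A W') :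
    (A + W * H) * Hᵀ + γ • W = 0 := by
  have key : ∀ D : Matrix (Fin N) (Fin p) ℝ, fip ((A + W * H) * Hᵀ + γ • W) D = 0 := by
    intro D
    have hexp : ∀ t : ℝ, objective γ H A (W + t • D) = objective γ H A W +
        (2 * (fip (A + W * H) (D * H) + γ * fip W D)) * t +
        (frobSq (D * H) + γ * frobSq D) * t ^ 2 := by
      intro t
      unfold objective
      have h1 : A + (W + t • D) * H = (A + W * H) + t • (D * H) := by
        rw [Matrix.add_mul, Matrix.smul_mul, ← add_assoc]
      rw [h1, frobSq_add, frobSq_add W (t • D), fip_smul_right, fip_smul_right,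
        frobSq_smul, frobSq_smul]
      ring
    have hq : 0 ≤ frobSq (D * H) + γ * frobSq D :=
      add_nonneg (frobSq_nonneg _) (mul_nonneg hγ.le (frobSq_nonneg _))
    have hline : ∀ t : ℝ, 0 ≤ (2 * (fip (A + W * H) (D * H) + γ * fip W D)) * t +
        (frobSq (D * H) + γ * frobSq D) * t ^ 2 := by
      intro t
      have := hW (W + t • D)
      rw [hexp t] at this
      linarith
    have h0 := lin_of_quad hq hline
    have h3 : fip ((A + W * H) * Hᵀ + γ • W) D =
        fip (A + W * H) (D * H) + γ * fip W D := by
      rw [fip_add_left, fip_smul_left, fip_mul_right]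
    rw [h3]; linarith
  have h0 := key ((A + W * H) * Hᵀ + γ • W)
  rw [← frobSq_eq_fip] at h0
  exact frobSq_eq_zero h0

lemma minSV_pos {p M : ℕ} (hp : 0 < p) (γ : ℝ) (hγ : 0 < γ) (H : Matrix (Fin p) (Fin M) ℝ) :
    0 < minSingularValue (H * Hᵀ + γ • (1 : Matrix (Fin p) (Fin p) ℝ)) := by
  set P := H * Hᵀ + γ • (1 : Matrix (Fin p) (Fin p) ℝ) with hP
  have hsemi : (H * Hᵀ).PosSemidef := by
    have := Matrix.posSemidef_self_mul_conjTranspose H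
    rwa [conjT_eq_transpose] at this
  have hsm : (γ • (1 : Matrix (Fin p) (Fin p) ℝ)).PosDef := by
    rw [Matrix.smul_one_eq_diagonal]
    exact Matrix.PosDef.diagonal fun _ => hγ
  have hPd : P.PosDef := Matrix.PosDef.posSemidef_add hsemi hsm
  have hPt : Pᵀ.PosDef := hPd.transpose
  have hinj : Function.Injective (Pᵀ.mulVec) :=
    Matrix.mulVec_injective_iff_isUnit.mpr hPt.isUnit
  have hPPh : (P * Pᴴ).PosDef := by
    refine Matrix.PosDef.of_dotProduct_mulVec_pos (Matrix.isHermitian_mul_conjTranspose_self P) fun x hx => ?_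
    have hst : star x = x := by funext i; exact star_trivial _
    have he : x ⬝ᵥ ((P * Pᴴ) *ᵥ x) = (Pᵀ *ᵥ x) ⬝ᵥ (Pᵀ *ᵥ x) := by
      rw [conjT_eq_transpose, ← mulVec_mulVec, dotProduct_mulVec (v := x), ← mulVec_transpose]
    rw [hst, he]
    have hx' : Pᵀ *ᵥ x ≠ 0 := fun h0 => hx (hinj (by simpa using h0))
    have := Matrix.dotProduct_star_self_pos_iff (v := Pᵀ *ᵥ x) |>.mpr hx'
    have hst2 : star (Pᵀ *ᵥ x) = Pᵀ *ᵥ x := by funext i; exact star_trivial _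
    rwa [hst2] at this
  haveI : Nonempty (Fin p) := ⟨⟨0, hp⟩⟩
  rw [minSingularValue, Real.sqrt_pos]
  obtain ⟨i0, hi0⟩ := Finite.exists_min
    (Matrix.isHermitian_mul_conjTranspose_self P).eigenvalues
  exact lt_of_lt_of_le (hPPh.eigenvalues_pos i0) (le_ciInf hi0)

/-- Proposition 3.1: if the residual matrices `A` and `B` of two ridge least-squares
problems differ by `A − B = U Σ Vᵀ` with `U, V` having orthonormal columns and `Σ`
diagonal, then the unique minimizers `W_A` and `W_B` satisfy
`‖W_A − W_B‖_F ≤ (σ_max(H) / σ_min(H Hᵀ + γ I)) ‖Σ‖_F`. -/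
theorem ridge_minimizer_perturbation_bound {N M p r : ℕ} (γ : ℝ) (hγ : 0 < γ)
    (H : Matrix (Fin p) (Fin M) ℝ)
    (U : Matrix (Fin N) (Fin r) ℝ) (V : Matrix (Fin M) (Fin r) ℝ)
    (Sig : Matrix (Fin r) (Fin r) ℝ)
    (hU : Uᵀ * U = 1) (hV : Vᵀ * V = 1) (hSig : Sig.IsDiag)
    (A B : Matrix (Fin N) (Fin M) ℝ) (hAB : A - B = U * Sig * Vᵀ)
    (W_A W_B : Matrix (Fin N) (Fin p) ℝ)
    (hWA : ∀ W : Matrix (Fin N) (Fin p) ℝ, objective γ H A W_A ≤ objective γ H A W)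
    (hWB : ∀ W : Matrix (Fin N) (Fin p) ℝ, objective γ H B W_B ≤ objective γ H B W) :
    frobNorm (W_A - W_B) ≤
      (maxSingularValue H /
        minSingularValue (H * Hᵀ + γ • (1 : Matrix (Fin p) (Fin p) ℝ))) * frobNorm Sig := by
  rcases Nat.eq_zero_or_pos p with hp | hp
  · subst hp
    have h1 : frobNorm (W_A - W_B) = 0 := by simp [frobNorm, frobSq]
    rw [h1, maxSingularValue, minSingularValue, frobNorm]
    positivity
  · set P := H * Hᵀ + γ • (1 : Matrix (Fin p) (Fin p) ℝ) with hPdef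
    have hGA := first_order γ hγ H A W_A hWA
    have hGB := first_order γ hγ H B W_B hWB
    set Δ := W_A - W_B with hΔ
    have hEq : Δ * P + (A - B) * Hᵀ = 0 := by
      have hc : Δ * P + (A - B) * Hᵀ =
          ((A + W_A * H) * Hᵀ + γ • W_A) - ((B + W_B * H) * Hᵀ + γ • W_B) := by
        rw [hPdef, hΔ]
        simp only [Matrix.mul_add, Matrix.sub_mul, Matrix.add_mul, Matrix.mul_smul,
          Matrix.mul_one, smul_sub, Matrix.mul_assoc]
        abel
      rw [hc, hGA, hGB, sub_zero]
    have hEq2 : Δ * P = -((U * Sig * Vᵀ) * Hᵀ) := by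
      rw [← hAB]
      exact eq_neg_of_add_eq_zero_left hEq
    have hfs1 : (minSingularValue P) ^ 2 * frobSq Δ ≤ frobSq (Δ * P) := frobSq_mul_ge Δ P
    have hfs2 : frobSq (Δ * P) = frobSq ((U * Sig * Vᵀ) * Hᵀ) := by rw [hEq2, frobSq_neg]
    have hfs3 : frobSq ((U * Sig * Vᵀ) * Hᵀ) ≤ (maxSingularValue H) ^ 2 * frobSq (U * Sig * Vᵀ) :=
      frobSq_mul_transpose_le _ H
    have hfs4 : frobSq (U * Sig * Vᵀ) = frobSq Sig := by
      rw [frobSq_eq_fip, frobSq_eq_fip, fip, fip]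
      have ht : (U * Sig * Vᵀ)ᵀ = V * (Sigᵀ * Uᵀ) := by
        rw [Matrix.transpose_mul, Matrix.transpose_mul, Matrix.transpose_transpose]
      rw [ht]
      have h5 : U * Sig * Vᵀ * (V * (Sigᵀ * Uᵀ)) = U * (Sig * (Sigᵀ * Uᵀ)) := by
        simp only [Matrix.mul_assoc]
        rw [← Matrix.mul_assoc Vᵀ V, hV, Matrix.one_mul]
      rw [h5, Matrix.trace_mul_comm]
      simp only [Matrix.mul_assoc]
      rw [hU, Matrix.mul_one]
    have hbpos : 0 < minSingularValue P := minSV_pos hp γ hγ H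
    have ha0 : 0 ≤ maxSingularValue H := Real.sqrt_nonneg _
    have hkey : (minSingularValue P) ^ 2 * frobSq Δ ≤ (maxSingularValue H) ^ 2 * frobSq Sig := by
      calc (minSingularValue P) ^ 2 * frobSq Δ ≤ frobSq (Δ * P) := hfs1
        _ = frobSq ((U * Sig * Vᵀ) * Hᵀ) := hfs2
        _ ≤ (maxSingularValue H) ^ 2 * frobSq (U * Sig * Vᵀ) := hfs3
        _ = (maxSingularValue H) ^ 2 * frobSq Sig := by rw [hfs4]
    have hΔle : frobSq Δ ≤ ((maxSingularValue H / minSingularValue P) * frobNorm Sig) ^ 2 := by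
      rw [mul_pow, div_pow, frobNorm, Real.sq_sqrt (frobSq_nonneg Sig),
        div_mul_eq_mul_div, le_div_iff₀ (by positivity)]
      nlinarith [hkey]
    calc frobNorm Δ = Real.sqrt (frobSq Δ) := rfl
      _ ≤ Real.sqrt (((maxSingularValue H / minSingularValue P) * frobNorm Sig) ^ 2) :=
        Real.sqrt_le_sqrt hΔle
      _ = (maxSingularValue H / minSingularValue P) * frobNorm Sig :=
        Real.sqrt_sq (mul_nonneg (div_nonneg ha0 hbpos.le) (Real.sqrt_nonneg (frobSq Sig)))
end

section
/- Let U ∈ ℝ^{N×q} and V ∈ ℝ^{s×q} have orthonormal columns, let Σ ∈ ℝ^{q×q} be diagonal, and let C ∈ ℝ^{N×w} be a new data chunk. Let Q R = [U Σ, C] be a QR decomposition of the N × (q+w) matrix [U Σ, C] (Q ∈ ℝ^{N×(q+w)} with orthonormal columns, R ∈ ℝ^{(q+w)×(q+w)} upper triangular), let V̂ ∈ ℝ^{(s+w)×(q+w)} be the block-diagonal matrix diag(V, I_w), and let R = G_U G_Σ G_Vᵀ be a singular value decomposition of R with G_U, G_V ∈ ℝ^{(q+w)×(q+w)} orthogonal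 and G_Σ diagonal with nonnegative entries. Then the matrices Q G_U ∈ ℝ^{N×(q+w)} and V̂ G_V ∈ ℝ^{(s+w)×(q+w)} have orthonormal columns and [U Σ Vᵀ, C] = (Q G_U) G_Σ (V̂ G_V)ᵀ; that is, the update step produces an exact singular value decomposition of the data matrix augmented by the new chunk C. -/
open Matrix

/-- Ordering of the concatenated index set `Fin q ⊕ Fin w`: the first block comes before
the second block, so `R` being upper triangular means `R.BlockTriangular (sumIdx q w)`. -/
def sumIdx (q w : ℕ) : Fin q ⊕ Fin w → ℕ :=
  Sum.elim (fun i => (i : ℕ)) (fun j => q + (j : ℕ))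

/-- Correctness (before truncation) of one step of the incremental SVD update: given a data
matrix in factored SVD form `U Σ Vᵀ` and a new chunk `C`, the QR decomposition
`Q R = [U Σ, C]`, the expansion `V̂ = diag(V, I)`, and an SVD `R = G_U G_Σ G_Vᵀ` produce an
exact SVD `[U Σ Vᵀ, C] = (Q G_U) G_Σ (V̂ G_V)ᵀ`, where `Q G_U` and `V̂ G_V` have orthonormal
columns. -/
theorem incremental_svd_update_exact {N s q w : ℕ}
    (U : Matrix (Fin N) (Fin q) ℝ) (V : Matrix (Fin s) (Fin q) ℝ)
    (Sig : Matrix (Fin q) (Fin q) ℝ)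
    (hU : Uᵀ * U = 1) (hV : Vᵀ * V = 1) (hSig : Sig.IsDiag)
    (C : Matrix (Fin N) (Fin w) ℝ)
    (Q : Matrix (Fin N) (Fin q ⊕ Fin w) ℝ)
    (R : Matrix (Fin q ⊕ Fin w) (Fin q ⊕ Fin w) ℝ)
    (hQ : Qᵀ * Q = 1) (hR : R.BlockTriangular (sumIdx q w))
    (hQR : Q * R = Matrix.fromCols (U * Sig) C)
    (Vhat : Matrix (Fin s ⊕ Fin w) (Fin q ⊕ Fin w) ℝ)
    (hVhat : Vhat = Matrix.fromBlocks V 0 0 (1 : Matrix (Fin w) (Fin w) ℝ))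
    (G_U G_Sig G_V : Matrix (Fin q ⊕ Fin w) (Fin q ⊕ Fin w) ℝ)
    (hGU : G_Uᵀ * G_U = 1) (hGU' : G_U * G_Uᵀ = 1)
    (hGV : G_Vᵀ * G_V = 1) (hGV' : G_V * G_Vᵀ = 1)
    (hGSig : G_Sig.IsDiag) (hGSignonneg : ∀ i, 0 ≤ G_Sig i i)
    (hRSVD : R = G_U * G_Sig * G_Vᵀ) :
    (Q * G_U)ᵀ * (Q * G_U) = 1 ∧
    (Vhat * G_V)ᵀ * (Vhat * G_V) = 1 ∧
    Matrix.fromCols (U * Sig * Vᵀ) C = (Q * G_U) * G_Sig * (Vhat * G_V)ᵀ := by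
  refine ⟨?_, ?_, ?_⟩
  · rw [transpose_mul, Matrix.mul_assoc, ← Matrix.mul_assoc Qᵀ, hQ, Matrix.one_mul, hGU]
  · rw [transpose_mul, Matrix.mul_assoc, ← Matrix.mul_assoc Vhatᵀ, hVhat]
    rw [fromBlocks_transpose, fromBlocks_multiply]
    simp [hV, fromBlocks_one, hGV]
  · have h1 : Q * R * Vhatᵀ = Matrix.fromCols (U * Sig * Vᵀ) C := by
      rw [hQR, hVhat, fromBlocks_transpose]
      simp [fromCols_mul_fromBlocks, Matrix.mul_assoc]
    rw [transpose_mul, show Q * G_U * G_Sig * (G_Vᵀ * Vhatᵀ) = Q * (G_U * G_Sig * G_Vᵀ) * Vhatᵀ by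
      simp only [Matrix.mul_assoc], ← hRSVD, h1]
end
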